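/- The map Ψ sending (S, A, B) to the block matrix [[S, A],[Aᵀ, 4B]] is a Lie algebra isomorphism from the Lie algebra (Sym(2K) ⋉ ℝ^{2K}) ⊕ ℝ with bracket [(S,A,B),(S',A',B')] = (S N̄ S' − S' N̄ S, S N̄ A' − S' N̄ A, (1/4)(Aᵀ N̄ A' − A'ᵀ N̄ A)) onto Sym(2K+1) with the Bloch-Iserles bracket [X,Y]_N = X N Y − Y N X, where N is the block matrix [[N̄, 0],[0, 0]]. -/

import Mathlib

open Matrix

/-- The block-matrix map `Ψ(S,A,B) = [[S, A],[Aᵀ, 4B]]`. -/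
def PsiBI {K : ℕ} (S : Matrix (Fin (2 * K)) (Fin (2 * K)) ℝ)
    (A : Fin (2 * K) → ℝ) (B : ℝ) :
    Matrix (Fin (2 * K) ⊕ Fin 1) (Fin (2 * K) ⊕ Fin 1) ℝ :=
  Matrix.fromBlocks S (fun i _ => A i) (fun _ j => A j) (fun _ _ => 4 * B)

/-- The extended antisymmetric matrix `N = [[N̄,0],[0,0]]`. -/
def bigN {K : ℕ} (Nbar : Matrix (Fin (2 * K)) (Fin (2 * K)) ℝ) :
    Matrix (Fin (2 * K) ⊕ Fin 1) (Fin (2 * K) ⊕ Fin 1) ℝ :=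
  Matrix.fromBlocks Nbar 0 0 0

/-- `Ψ` is a Lie algebra isomorphism from `(Sym(2K) ⋉ ℝ^{2K}) ⊕ ℝ` with the
bracket `[(S,A,B),(S',A',B')] = (S N̄ S' − S' N̄ S, S N̄ A' − S' N̄ A,
(1/4)(Aᵀ N̄ A' − A'ᵀ N̄ A))` onto `Sym(2K+1)` with the Bloch–Iserles bracket. -/
theorem Psi_lie_algebra_isomorphism {K : ℕ}
    (Nbar : Matrix (Fin (2 * K)) (Fin (2 * K)) ℝ) (hN : Nbarᵀ = -Nbar) :
    -- linearity
    (∀ (S S' : Matrix (Fin (2 * K)) (Fin (2 * K)) ℝ) (A A' : Fin (2 * K) → ℝ) (B B' : ℝ),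
        PsiBI (S + S') (A + A') (B + B') = PsiBI S A B + PsiBI S' A' B') ∧
    (∀ (c : ℝ) (S : Matrix (Fin (2 * K)) (Fin (2 * K)) ℝ) (A : Fin (2 * K) → ℝ) (B : ℝ),
        PsiBI (c • S) (c • A) (c * B) = c • PsiBI S A B) ∧
    -- Ψ maps symmetric triples to symmetric matrices
    (∀ (S : Matrix (Fin (2 * K)) (Fin (2 * K)) ℝ) (A : Fin (2 * K) → ℝ) (B : ℝ),
        Sᵀ = S → (PsiBI S A B)ᵀ = PsiBI S A B) ∧
    -- injectivity
    (∀ (S S' : Matrix (Fin (2 * K)) (Fin (2 * K)) ℝ) (A A' : Fin (2 * K) → ℝ) (B B' : ℝ),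
        PsiBI S A B = PsiBI S' A' B' → S = S' ∧ A = A' ∧ B = B') ∧
    -- surjectivity onto Sym(2K+1)
    (∀ M : Matrix (Fin (2 * K) ⊕ Fin 1) (Fin (2 * K) ⊕ Fin 1) ℝ, Mᵀ = M →
        ∃ (S : Matrix (Fin (2 * K)) (Fin (2 * K)) ℝ) (A : Fin (2 * K) → ℝ) (B : ℝ),
          Sᵀ = S ∧ PsiBI S A B = M) ∧
    -- bracket preservation
    (∀ (S S' : Matrix (Fin (2 * K)) (Fin (2 * K)) ℝ) (A A' : Fin (2 * K) → ℝ) (B B' : ℝ),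
        Sᵀ = S → S'ᵀ = S' →
        PsiBI (S * Nbar * S' - S' * Nbar * S)
          ((S * Nbar).mulVec A' - (S' * Nbar).mulVec A)
          ((1 / 4) * (A ⬝ᵥ Nbar.mulVec A' - A' ⬝ᵥ Nbar.mulVec A))
        = PsiBI S A B * bigN Nbar * PsiBI S' A' B'
          - PsiBI S' A' B' * bigN Nbar * PsiBI S A B) := by
  have hNs : ∀ k l, Nbar l k = - Nbar k l := fun k l => by
    have := congrFun (congrFun hN k) l; simpa using this
  refine ⟨?_, ?_, ?_, ?_, ?_, ?_⟩
  · intro S S' A A' B B'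
    ext (i|i) (j|j) <;> simp [PsiBI, fromBlocks] <;> ring
  · intro c S A B
    ext (i|i) (j|j) <;> simp [PsiBI, fromBlocks] <;> ring
  · intro S A B hS
    have hSs : ∀ a b, S a b = S b a := fun a b => by
      simpa using congrFun (congrFun hS.symm a) b
    ext (i|i) (j|j) <;> simp [PsiBI, fromBlocks, hSs]
  · intro S S' A A' B B' h
    refine ⟨?_, ?_, ?_⟩
    · ext i j
      simpa [PsiBI, fromBlocks] using congrFun (congrFun h (Sum.inl i)) (Sum.inl j)
    · ext i
      simpa [PsiBI, fromBlocks] using congrFun (congrFun h (Sum.inl i)) (Sum.inr 0)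
    · have := congrFun (congrFun h (Sum.inr 0)) (Sum.inr 0)
      simp [PsiBI, fromBlocks] at this
      linarith
  · intro M hM
    have hMs : ∀ a b, M a b = M b a := fun a b => by
      simpa using congrFun (congrFun hM.symm a) b
    refine ⟨fun i j => M (Sum.inl i) (Sum.inl j), fun i => M (Sum.inl i) (Sum.inr 0),
      M (Sum.inr 0) (Sum.inr 0) / 4, ?_, ?_⟩
    · ext i j; exact hMs _ _
    · ext (i|i) (j|j)
      · simp [PsiBI, fromBlocks, Fin.fin_one_eq_zero]
      · simp [PsiBI, fromBlocks, Fin.fin_one_eq_zero]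
      · simp [PsiBI, fromBlocks, Fin.fin_one_eq_zero, hMs (Sum.inr 0) (Sum.inl j)]
      · simp [PsiBI, fromBlocks, Fin.fin_one_eq_zero]; ring
  · intro S S' A A' B B' hS hS'
    have hSs : ∀ a b, S a b = S b a := fun a b => by
      simpa using congrFun (congrFun hS.symm a) b
    have hSs' : ∀ a b, S' a b = S' b a := fun a b => by
      simpa using congrFun (congrFun hS'.symm a) b
    ext (i|i) (j|j) <;>
      simp [PsiBI, fromBlocks, bigN, Matrix.mul_apply, Matrix.sub_apply, Matrix.mulVec, dotProduct,
        Fintype.sum_sum_type, Finset.sum_sub_distrib, Finset.mul_sum, Finset.sum_mul]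
    · have key : ∀ (T : Matrix (Fin (2*K)) (Fin (2*K)) ℝ), (∀ a b, T a b = T b a) →
          ∀ (V : Fin (2*K) → ℝ),
          ∑ x : Fin (2*K), ∑ i : Fin (2*K), T j i * Nbar i x * V x
            = - ∑ x : Fin (2*K), ∑ i : Fin (2*K), V i * Nbar i x * T x j := by
        intro T hTs V
        calc ∑ x : Fin (2*K), ∑ i : Fin (2*K), T j i * Nbar i x * V x
            = ∑ x : Fin (2*K), ∑ i : Fin (2*K), -(V x * Nbar x i * T i j) := by
              refine Finset.sum_congr rfl fun x _ => Finset.sum_congr rfl fun i _ => ?_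
              rw [hNs i x, hTs j i]; ring
          _ = -∑ x : Fin (2*K), ∑ i : Fin (2*K), V x * Nbar x i * T i j := by
              simp
          _ = -∑ x : Fin (2*K), ∑ i : Fin (2*K), V i * Nbar i x * T x j := by
              rw [Finset.sum_comm]
      rw [key S hSs A', key S' hSs' A]; ring
    · have comm : ∀ (V W : Fin (2*K) → ℝ),
          ∑ x : Fin (2*K), ∑ i : Fin (2*K), V x * (Nbar x i * W i)
            = ∑ x : Fin (2*K), ∑ i : Fin (2*K), V i * Nbar i x * W x := by
        intro V W
        rw [Finset.sum_comm]
        exact Finset.sum_congr rfl fun _ _ => Finset.sum_congr rfl fun _ _ => by ring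
      rw [comm A A', comm A' A]
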